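/- For every integer n ≥ 1 and all real numbers u and θ, the following factorization holds: T_n(u) − cos(nθ) = 2^{n−1} · ∏_{j=0}^{n−1} (u − cos(θ − 2πj/n)). -/

import Mathlib

open Real Finset Filter

lemma prod_root_aux {n : ℕ} (hn : 0 < n) {ζ : ℂ} (hζ : IsPrimitiveRoot ζ n) (c t : ℂ) :
    ∏ j ∈ Finset.range n, (t - ζ ^ j * c) = t ^ n - c ^ n := by
  have hm : (Polynomial.X ^ n - Polynomial.C (c ^ n)).Monic :=
    Polynomial.monic_X_pow_sub_C _ hn.ne'
  have hs := IsAlgClosed.splits (k := ℂ)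
    (Polynomial.X ^ n - Polynomial.C (c ^ n))
  have hp := hs.eq_prod_roots_of_monic hm
  have hroots : (Polynomial.X ^ n - Polynomial.C (c ^ n)).roots
      = (Multiset.range n).map (fun j => ζ ^ j * c) := by
    have := hζ.nthRoots_eq (α := c) (a := c ^ n) rfl
    rwa [Polynomial.nthRoots] at this
  have := congrArg (Polynomial.eval t) hp
  simp only [Polynomial.eval_sub, Polynomial.eval_pow, Polynomial.eval_X, Polynomial.eval_C,
    Polynomial.eval_multiset_prod, Multiset.map_map, hroots] at this
  rw [Finset.prod_eq_multiset_prod, this]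
  simp [Finset.range_val]

lemma key_complex (n : ℕ) (hn : 1 ≤ n) (φ θ : ℂ) :
    Complex.cos (n * φ) - Complex.cos (n * θ) =
      2 ^ (n - 1) *
        ∏ j ∈ Finset.range n, (Complex.cos φ - Complex.cos (θ - 2 * (π : ℂ) * j / n)) := by
  have hn0 : (0:ℕ) < n := hn
  have hnC : (n : ℂ) ≠ 0 := Nat.cast_ne_zero.mpr hn0.ne'
  set t : ℂ := Complex.exp (φ * Complex.I) with ht
  set z : ℂ := Complex.exp (θ * Complex.I) with hz
  set ζ : ℂ := Complex.exp (2 * (π : ℂ) * Complex.I / n) with hζdef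
  have hζ : IsPrimitiveRoot ζ n := Complex.isPrimitiveRoot_exp n hn0.ne'
  have hζ' : IsPrimitiveRoot ζ⁻¹ n := hζ.inv
  have ht0 : t ≠ 0 := Complex.exp_ne_zero _
  have hz0 : z ≠ 0 := Complex.exp_ne_zero _
  have hfac : ∀ j ∈ Finset.range n,
      Complex.cos φ - Complex.cos (θ - 2 * (π : ℂ) * j / n)
        = (t - (ζ⁻¹) ^ j * z) * (t - ζ ^ j * z⁻¹) / (2 * t) := by
    intro j _
    have hcφ : 2 * Complex.cos φ = t + t⁻¹ := by
      rw [Complex.two_cos, ht, ← Complex.exp_neg]; ring_nf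
    have harg : Complex.exp ((θ - 2 * (π : ℂ) * j / n) * Complex.I) = (ζ⁻¹) ^ j * z := by
      rw [hζdef, hz, ← Complex.exp_neg, ← Complex.exp_nat_mul, ← Complex.exp_add]
      congr 1
      field_simp
      ring
    have h2arg : Complex.exp (-(θ - 2 * (π : ℂ) * j / n) * Complex.I) = ζ ^ j * z⁻¹ := by
      rw [hζdef, hz, ← Complex.exp_neg, ← Complex.exp_nat_mul, ← Complex.exp_add]
      congr 1
      field_simp
      ring
    have hcθ : 2 * Complex.cos (θ - 2 * (π : ℂ) * j / n) = (ζ⁻¹) ^ j * z + ζ ^ j * z⁻¹ := by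
      rw [Complex.two_cos, harg, h2arg]
    have hζ0 : ζ ≠ 0 := Complex.exp_ne_zero _
    have hprod : ((ζ⁻¹) ^ j * z) * (ζ ^ j * z⁻¹) = 1 := by
      rw [mul_mul_mul_comm, ← mul_pow, inv_mul_cancel₀ hζ0, one_pow, one_mul,
        mul_inv_cancel₀ hz0]
    have hinv : t * t⁻¹ = 1 := mul_inv_cancel₀ ht0
    rw [eq_div_iff (mul_ne_zero two_ne_zero ht0)]
    linear_combination t * hcφ - t * hcθ - hprod + hinv
  rw [Finset.prod_congr rfl hfac, Finset.prod_div_distrib, Finset.prod_mul_distrib,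
    Finset.prod_const, prod_root_aux hn0 hζ' z t, prod_root_aux hn0 hζ z⁻¹ t]
  have htnφ : t ^ n = Complex.exp ((n * φ) * Complex.I) := by
    rw [ht, ← Complex.exp_nat_mul, mul_assoc]
  have hznθ : z ^ n = Complex.exp ((n * θ) * Complex.I) := by
    rw [hz, ← Complex.exp_nat_mul, mul_assoc]
  have hcnφ : 2 * Complex.cos (n * φ) = t ^ n + (t ^ n)⁻¹ := by
    rw [Complex.two_cos, htnφ, ← Complex.exp_neg, neg_mul]
  have hcnθ : 2 * Complex.cos (n * θ) = z ^ n + (z ^ n)⁻¹ := by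
    rw [Complex.two_cos, hznθ, ← Complex.exp_neg, neg_mul]
  have htn : t ^ n ≠ 0 := pow_ne_zero _ ht0
  have hzn : z ^ n ≠ 0 := pow_ne_zero _ hz0
  have hzinv : (z⁻¹) ^ n = (z ^ n)⁻¹ := by rw [inv_pow]
  rw [hzinv]
  have key2 : (t ^ n - z ^ n) * (t ^ n - (z ^ n)⁻¹)
      = (2 * Complex.cos (n * φ) - 2 * Complex.cos (n * θ)) * t ^ n := by
    have h1 : z ^ n * (z ^ n)⁻¹ = 1 := mul_inv_cancel₀ hzn
    have h2' : t ^ n * (t ^ n)⁻¹ = 1 := mul_inv_cancel₀ htn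
    linear_combination (-(t ^ n)) * hcnφ + t ^ n * hcnθ + h1 - h2'
  rw [key2, mul_pow]
  have h2 : (2:ℂ) ^ (n - 1) * 2 = 2 ^ n := by
    rw [← pow_succ, Nat.sub_add_cancel hn]
  have h2n : (2:ℂ) ^ n ≠ 0 := pow_ne_zero _ two_ne_zero
  field_simp
  simp only [Finset.card_range]
  linear_combination (Complex.cos (↑n * θ) - Complex.cos (↑n * φ)) * t ^ n * h2

noncomputable def cT (k : ℤ) (x : ℝ) : ℝ := (Polynomial.Chebyshev.T ℝ k).eval x

noncomputable def cU (k : ℤ) (x : ℝ) : ℝ := (Polynomial.Chebyshev.U ℝ k).eval x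

noncomputable def x0 (n : ℕ) (u θ : ℝ) : ℝ :=
  Real.sin (n * θ) / (n * (cT n u - Real.cos (n * θ)))

noncomputable def x1 (n : ℕ) (u θ : ℝ) : ℝ :=
  -(cT ((n : ℤ) - 1) u * Real.sin θ + u * Real.sin (((n : ℝ) - 1) * θ)) /
      (n * (cT n u - Real.cos (n * θ))) +
    ((n : ℝ) - 1) / (n : ℝ) ^ 2 *
      ∑ j ∈ Finset.Icc 1 (n - 1),
        Real.log (u - Real.cos (θ - 2 * π * j / n)) * Real.sin (2 * π * j / n)

noncomputable def x2 (n : ℕ) (u θ : ℝ) : ℝ :=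
  (-(cT ((n : ℤ) - 1) u) * Real.cos θ + u * Real.cos (((n : ℝ) - 1) * θ)) /
      (n * (cT n u - Real.cos (n * θ))) +
    ((n : ℝ) - 1) / (n : ℝ) ^ 2 *
      ∑ j ∈ Finset.range n,
        Real.log (u - Real.cos (θ - 2 * π * j / n)) * Real.cos (2 * π * j / n)

def Omega (n : ℕ) : Set (ℝ × ℝ) :=
  {p | ∀ j < n, Real.cos (p.2 - 2 * π * j / n) < p.1}

theorem stmt0 (n : ℕ) (hn : 1 ≤ n) (u θ : ℝ) :
    cT n u - Real.cos (n * θ) =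
      2 ^ (n - 1) * ∏ j ∈ Finset.range n, (u - Real.cos (θ - 2 * π * j / n)) := by
  obtain ⟨φ, hφ⟩ := Complex.cos_surjective (u : ℂ)
  have hkey := key_complex n hn φ (θ : ℂ)
  have hT : ((cT n u : ℝ) : ℂ) = Complex.cos (n * φ) := by
    unfold cT
    rw [show ((Polynomial.eval u (Polynomial.Chebyshev.T ℝ (n:ℤ)) : ℝ) : ℂ)
          = Complex.ofRealHom (Polynomial.eval u (Polynomial.Chebyshev.T ℝ (n:ℤ))) from rfl,
      ← Polynomial.eval₂_at_apply, ← Polynomial.eval_map, Polynomial.Chebyshev.map_T,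
      show (Complex.ofRealHom u) = (u:ℂ) from rfl, ← hφ, Polynomial.Chebyshev.T_complex_cos]
    norm_cast
  apply Complex.ofReal_injective
  push_cast [Complex.ofReal_cos]
  rw [hT, hkey, ← hφ]
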